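/- (Theorem 2, analytic core: neutrality forces Tullock technology.) Let K be a finite index set with at least two elements, let d_k > 0 for each k ∈ K, and for each k ∈ K let h_k: (0,∞) → (0,∞) be differentiable, strictly increasing, with h_k(x) → 0 as x → 0+. Suppose that for every z > 0 and every family (z_k)_{k∈K} of positive reals with Σ_{k∈K} d_k z_k = (Σ_{k∈K} d_k) · z, one has Σ_{k∈K} d_k · h_k(z_k)/h_k(z) = Σ_{k∈K} d_k. Then for each k ∈ K there exists r_k > 0 such that h_k(x) = x/r_k for all x > 0. -/

import Mathlib

/-- Theorem 2, analytic core: if neutrality of effort discrimination holds for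
all perturbed semi-symmetric effort profiles, then each inverse
semi-elasticity `h k` is linear, i.e. `h k x = x / r k` for some `r k > 0`
(so each contest production function is of Tullock form). -/
theorem neutrality_implies_tullock
    (K : Finset ℕ) (hK : 2 ≤ K.card)
    (d : ℕ → ℝ) (hd : ∀ k ∈ K, 0 < d k)
    (h : ℕ → ℝ → ℝ)
    (hpos : ∀ k ∈ K, ∀ x > (0 : ℝ), 0 < h k x)
    (hdiff : ∀ k ∈ K, ∀ x > (0 : ℝ), DifferentiableAt ℝ (h k) x)
    (hmono : ∀ k ∈ K, StrictMonoOn (h k) (Set.Ioi (0 : ℝ)))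
    (hlim : ∀ k ∈ K, Filter.Tendsto (h k) (nhdsWithin 0 (Set.Ioi (0 : ℝ))) (nhds 0))
    (hneut : ∀ z > (0 : ℝ), ∀ zf : ℕ → ℝ, (∀ k ∈ K, 0 < zf k) →
      (∑ k ∈ K, d k * zf k) = (∑ k ∈ K, d k) * z →
      ∑ k ∈ K, d k * (h k (zf k) / h k z) = ∑ k ∈ K, d k) :
    ∀ k ∈ K, ∃ r > (0 : ℝ), ∀ x > (0 : ℝ), h k x = x / r := by
  intro k hk
  obtain ⟨j, hjK, hjk⟩ := Finset.exists_mem_ne (show 1 < K.card by omega) k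
  have hdk := hd k hk
  have hdj := hd j hjK
  have hspos : 0 < d k + d j := by positivity
  set a : ℝ := d k / (d k + d j) with ha
  set b : ℝ := d j / (d k + d j) with hb
  have hapos : 0 < a := by rw [ha]; positivity
  have hbpos : 0 < b := by rw [hb]; positivity
  have hab : a + b = 1 := by
    rw [ha, hb]; field_simp
  clear_value a b
  -- Step 1: the two-variable key identity
  have key : ∀ x > (0:ℝ), ∀ y > (0:ℝ),
      a * (h k x / h k (a*x+b*y)) + b * (h j y / h j (a*x+b*y)) = 1 := by
    intro x hx y hy
    set z := a*x+b*y with hz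
    have hzpos : 0 < z := by positivity
    have hkz := hpos k hk z hzpos
    have hjz := hpos j hjK z hzpos
    set zf : ℕ → ℝ := fun m => if m = k then x else if m = j then y else z with hzf
    have hzfpos : ∀ m ∈ K, 0 < zf m := by
      intro m hm; simp only [hzf]; split_ifs <;> assumption
    have hjK' : j ∈ K.erase k := Finset.mem_erase.2 ⟨hjk, hjK⟩
    have split2 : ∀ f : ℕ → ℝ, ∑ m ∈ K, f m
        = f k + (f j + ∑ m ∈ (K.erase k).erase j, f m) := by
      intro f
      rw [← Finset.add_sum_erase _ _ hk, ← Finset.add_sum_erase _ _ hjK']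
    have hsum : (∑ m ∈ K, d m * zf m) = (∑ m ∈ K, d m) * z := by
      rw [Finset.sum_mul, split2 (fun m => d m * zf m), split2 (fun m => d m * z)]
      have h1 : ∀ m ∈ (K.erase k).erase j, d m * zf m = d m * z := by
        intro m hm
        simp only [Finset.mem_erase] at hm
        simp [hzf, hm.1, hm.2.1]
      rw [Finset.sum_congr rfl h1]
      have hzfk : zf k = x := by simp [hzf]
      have hzfj : zf j = y := by simp [hzf, hjk]
      rw [hzfk, hzfj]
      have : d k * x + d j * y = d k * z + d j * z := by
        rw [hz, ha, hb]; field_simp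
      linarith
    have h2 := hneut z hzpos zf hzfpos hsum
    rw [split2 (fun m => d m * (h m (zf m) / h m z)), split2 d] at h2
    have h1 : ∀ m ∈ (K.erase k).erase j, d m * (h m (zf m) / h m z) = d m := by
      intro m hm
      have hmK : m ∈ K := Finset.mem_of_mem_erase (Finset.mem_of_mem_erase hm)
      simp only [Finset.mem_erase] at hm
      simp only [hzf, hm.1, hm.2.1, if_false]
      rw [div_self (ne_of_gt (hpos m hmK z hzpos)), mul_one]
    rw [Finset.sum_congr rfl h1] at h2
    have hzfk : zf k = x := by simp [hzf]
    have hzfj : zf j = y := by simp [hzf, hjk]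
    rw [hzfk, hzfj] at h2
    have h3 : d k * (h k x / h k z) + d j * (h j y / h j z) = d k + d j := by linarith
    have h4 : a * (h k x / h k z) + b * (h j y / h j z)
        = (d k * (h k x / h k z) + d j * (h j y / h j z)) / (d k + d j) := by
      rw [ha, hb]; ring
    rw [h4, h3, div_self (ne_of_gt hspos)]
  -- Step 2: the differentiated identity
  have eqd : ∀ y > (0:ℝ), ∀ x > (0:ℝ),
      a * ((deriv (h k) x * h k (a*x+b*y) - h k x * (deriv (h k) (a*x+b*y) * a)) / (h k (a*x+b*y))^2)
      + b * ((0 * h j (a*x+b*y) - h j y * (deriv (h j) (a*x+b*y) * a)) / (h j (a*x+b*y))^2) = 0 := by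
    intro y hy x hx
    set z := a*x+b*y with hz
    have hzpos : 0 < z := by positivity
    have hkzne : h k z ≠ 0 := ne_of_gt (hpos k hk z hzpos)
    have hjzne : h j z ≠ 0 := ne_of_gt (hpos j hjK z hzpos)
    have l1 : HasDerivAt (fun t : ℝ => a*t+b*y) a x := by
      simpa using ((hasDerivAt_id x).const_mul a).add_const (b*y)
    have l2 : HasDerivAt (h k) (deriv (h k) x) x := (hdiff k hk x hx).hasDerivAt
    have l3 : HasDerivAt (fun t : ℝ => h k (a*t+b*y)) (deriv (h k) z * a) x :=
      ((hdiff k hk z hzpos).hasDerivAt.comp x l1)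
    have l4 : HasDerivAt (fun t : ℝ => h j (a*t+b*y)) (deriv (h j) z * a) x :=
      ((hdiff j hjK z hzpos).hasDerivAt.comp x l1)
    have l5 : HasDerivAt (fun t : ℝ => h k t / h k (a*t+b*y))
        ((deriv (h k) x * h k z - h k x * (deriv (h k) z * a)) / (h k z)^2) x :=
      l2.div l3 hkzne
    have l6 : HasDerivAt (fun t : ℝ => h j y / h j (a*t+b*y))
        ((0 * h j z - h j y * (deriv (h j) z * a)) / (h j z)^2) x :=
      (hasDerivAt_const x (h j y)).div l4 hjzne
    have l7 : HasDerivAt (fun t : ℝ => a * (h k t / h k (a*t+b*y)) + b * (h j y / h j (a*t+b*y)))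
        (a * ((deriv (h k) x * h k z - h k x * (deriv (h k) z * a)) / (h k z)^2)
          + b * ((0 * h j z - h j y * (deriv (h j) z * a)) / (h j z)^2)) x :=
      (l5.const_mul a).add (l6.const_mul b)
    have heq : (fun t : ℝ => a * (h k t / h k (a*t+b*y)) + b * (h j y / h j (a*t+b*y)))
        =ᶠ[nhds x] (fun _ => (1:ℝ)) := by
      filter_upwards [Ioi_mem_nhds hx] with t ht
      exact key t ht y hy
    have l8 : HasDerivAt (fun _ : ℝ => (1:ℝ))
        (a * ((deriv (h k) x * h k z - h k x * (deriv (h k) z * a)) / (h k z)^2)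
          + b * ((0 * h j z - h j y * (deriv (h j) z * a)) / (h j z)^2)) x :=
      l7.congr_of_eventuallyEq heq.symm
    have := l8.deriv
    rw [deriv_const] at this
    exact this.symm
  -- Fact A : common semi-elasticity
  have factA : ∀ w > (0:ℝ), deriv (h k) w * h j w = deriv (h j) w * h k w := by
    intro w hw
    have hww : a*w+b*w = w := by rw [← add_mul, hab, one_mul]
    have e := eqd w hw w hw
    rw [hww] at e
    have hkw : 0 < h k w := hpos k hk w hw
    have hjw : 0 < h j w := hpos j hjK w hw
    have hb1 : b = 1 - a := by linarith
    field_simp at e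
    have e2 : (deriv (h k) w * h j w - deriv (h j) w * h k w)
        * (a * b * h k w * h j w) = 0 := by
      linear_combination (h k w * h j w) * e + a * deriv (h k) w * h k w * h j w ^ 2 * hab
    have hprod : a * b * h k w * h j w ≠ 0 := by positivity
    have := (mul_eq_zero.mp e2).resolve_right hprod
    linarith
  -- Fact B : the derivative is translation invariant
  have factB : ∀ x > (0:ℝ), ∀ y > (0:ℝ), deriv (h k) x = deriv (h k) (a*x+b*y) := by
    intro x hx y hy
    set z := a*x+b*y with hz
    have hzpos : 0 < z := by positivity
    have hkz : 0 < h k z := hpos k hk z hzpos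
    have hjz : 0 < h j z := hpos j hjK z hzpos
    have e := eqd y hy x hx
    have keyI := key x hx y hy
    have fA := factA z hzpos
    rw [← hz] at e keyI
    have hkzne : h k z ≠ 0 := ne_of_gt hkz
    have hjzne : h j z ≠ 0 := ne_of_gt hjz
    have cancel : deriv (h k) x * (a * (h k z * (h j z)^2))
        = deriv (h k) z * (a * (h k z * (h j z)^2)) := by
      field_simp at e keyI
      linear_combination e + a * deriv (h k) z * h j z * keyI
        - a * b * h j y * h k z * fA
    exact mul_right_cancel₀ (by positivity) cancel
  -- the derivative is globally constant
  have halt : a < 1 := by linarith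
  have factC : ∀ x > (0:ℝ), deriv (h k) x = deriv (h k) 1 := by
    have step : ∀ x > (0:ℝ), ∀ w, x < w → deriv (h k) x = deriv (h k) w := by
      intro x hx w hxw
      have hbne : b ≠ 0 := ne_of_gt hbpos
      have hy : 0 < (w - a*x)/b := by
        apply div_pos _ hbpos
        nlinarith
      have hw : a*x + b*((w - a*x)/b) = w := by field_simp; ring
      have := factB x hx ((w - a*x)/b) hy
      rwa [hw] at this
    intro x hx
    rcases lt_trichotomy x 1 with hc | hc | hc
    · exact step x hx 2 (by linarith) |>.trans (step 1 one_pos 2 one_lt_two).symm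
    · rw [hc]
    · exact (step 1 one_pos x hc).symm.trans rfl |>.symm.trans rfl |>.symm
  set c := deriv (h k) 1 with hc
  -- mean value theorem: h k is affine
  have mvt : ∀ u v : ℝ, 0 < u → u < v → h k v - h k u = c * (v - u) := by
    intro u v hu huv
    have hcont : ContinuousOn (h k) (Set.Icc u v) := by
      intro t ht
      exact ((hdiff k hk t (lt_of_lt_of_le hu ht.1)).continuousAt).continuousWithinAt
    have hder : ∀ t ∈ Set.Ioo u v, HasDerivAt (h k) ((fun _ => c) t) t := by
      intro t ht
      have h1 := (hdiff k hk t (hu.trans ht.1)).hasDerivAt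
      rwa [factC t (hu.trans ht.1)] at h1
    obtain ⟨ξ, hξ, hslope⟩ := exists_hasDerivAt_eq_slope (h k) (fun _ => c) huv hcont hder
    have hne : v - u ≠ 0 := by linarith
    field_simp at hslope
    linarith
  have haffine : ∀ x > (0:ℝ), h k x = c * x + (h k 1 - c) := by
    intro x hx
    rcases lt_trichotomy x 1 with hc1 | hc1 | hc1
    · have := mvt x 1 hx hc1; linarith [this]
    · rw [hc1]; ring
    · have := mvt 1 x one_pos hc1; linarith [this]
  -- the constant term vanishes
  have hconst : h k 1 - c = 0 := by
    have t1 : Filter.Tendsto (fun x : ℝ => c * x + (h k 1 - c))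
        (nhdsWithin 0 (Set.Ioi (0:ℝ))) (nhds (h k 1 - c)) := by
      have tc : Filter.Tendsto (fun x : ℝ => c * x + (h k 1 - c))
          (nhds 0) (nhds (c * 0 + (h k 1 - c))) := by
        exact (Filter.Tendsto.const_mul c (Filter.tendsto_id)).add_const _
      simpa using tc.mono_left nhdsWithin_le_nhds
    have t2 : Filter.Tendsto (h k) (nhdsWithin 0 (Set.Ioi (0:ℝ)))
        (nhds (h k 1 - c)) := by
      apply t1.congr'
      filter_upwards [self_mem_nhdsWithin] with x hx
      exact (haffine x hx).symm
    exact tendsto_nhds_unique t2 (hlim k hk)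
  have hlin : ∀ x > (0:ℝ), h k x = c * x := by
    intro x hx
    rw [haffine x hx, hconst, add_zero]
  have hcpos : 0 < c := by
    have := hlin 1 one_pos
    have := hpos k hk 1 one_pos
    nlinarith
  refine ⟨1 / c, by positivity, ?_⟩
  intro x hx
  rw [hlin x hx]
  field_simp
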